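/- (Density step of the positivity limiter.) Let ε > 0, ŵ ∈ (0,1), and let w, q, r ∈ ℝ⁶ satisfy (1 − ŵ)q + ŵr = w. Denote by ρ_w, ρ_q, ρ_r the first components of w, q, r, and assume ρ_w ≥ ε. Set ρ_min = min(ρ_q, ρ_r) and θ₁ = min{(ρ_w − ε)/(ρ_w − ρ_min), 1} if ρ_min < ε (in which case ρ_min < ρ_w so the quotient is defined), and θ₁ = 1 if ρ_min ≥ ε. Define the limited states q̂ = w + θ₁(q − w) and r̂ = w + θ₁(r − w). Then θ₁ ∈ [0,1], the first components of both q̂ and r̂ are ≥ ε, and the quadrature identity is preserved: (1 − ŵ)q̂ + ŵr̂ = w. -/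
import Mathlib


noncomputable section

/-- Density step of the positivity limiter: scaling the states `q`, `r` toward
the reference state `w` by the factor `θ₁` makes their densities at least `ε`
while preserving the quadrature identity `(1-ŵ)q + ŵr = w`. -/
theorem density_limiter_step (ε what : ℝ) (hε : 0 < ε)
    (hwhat : what ∈ Set.Ioo (0 : ℝ) 1)
    (w q r : Fin 6 → ℝ)
    (hquad : (1 - what) • q + what • r = w)
    (hw : w 0 ≥ ε)
    (θ : ℝ)
    (hθ : θ = if min (q 0) (r 0) < ε
      then min ((w 0 - ε) / (w 0 - min (q 0) (r 0))) 1
      else 1) :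
    θ ∈ Set.Icc (0 : ℝ) 1 ∧
    (w + θ • (q - w)) 0 ≥ ε ∧
    (w + θ • (r - w)) 0 ≥ ε ∧
    (1 - what) • (w + θ • (q - w)) + what • (w + θ • (r - w)) = w := by
  obtain ⟨h0, h1⟩ := hwhat
  have hw0 : w 0 = (1 - what) * q 0 + what * r 0 := by
    have := congrFun hquad 0
    simpa [Pi.add_apply, Pi.smul_apply, smul_eq_mul] using this.symm
  set m := min (q 0) (r 0) with hm
  have hmq : m ≤ q 0 := min_le_left _ _
  have hmr : m ≤ r 0 := min_le_right _ _
  have hmw : m ≤ w 0 := by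
    rw [hw0]
    nlinarith [min_le_left (q 0) (r 0), min_le_right (q 0) (r 0)]
  -- θ bounds
  have hθmem : θ ∈ Set.Icc (0:ℝ) 1 := by
    rw [hθ]
    split_ifs with h
    · have hden : 0 < w 0 - m := by linarith
      constructor
      · exact le_min (div_nonneg (by linarith) hden.le) zero_le_one
      · exact min_le_right _ _
    · exact ⟨zero_le_one, le_refl 1⟩
  obtain ⟨hθ0, hθ1⟩ := hθmem
  -- key density bound
  have key : ∀ z : Fin 6 → ℝ, m ≤ z 0 → (w + θ • (z - w)) 0 ≥ ε := by
    intro z hz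
    have hval : (w + θ • (z - w)) 0 = w 0 + θ * (z 0 - w 0) := by
      simp [Pi.add_apply, Pi.smul_apply, Pi.sub_apply, smul_eq_mul]
    rw [hval]
    have hstep : w 0 + θ * (m - w 0) ≥ ε := by
      rw [hθ]
      split_ifs with h
      · have hden : 0 < w 0 - m := by linarith
        have hle : min ((w 0 - ε) / (w 0 - m)) 1 ≤ (w 0 - ε) / (w 0 - m) :=
          min_le_left _ _
        have hnn : 0 ≤ min ((w 0 - ε) / (w 0 - m)) 1 :=
          le_min (div_nonneg (by linarith) hden.le) zero_le_one
        have : min ((w 0 - ε) / (w 0 - m)) 1 * (w 0 - m) ≤ w 0 - ε := by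
          calc min ((w 0 - ε) / (w 0 - m)) 1 * (w 0 - m)
              ≤ (w 0 - ε) / (w 0 - m) * (w 0 - m) :=
                mul_le_mul_of_nonneg_right hle hden.le
            _ = w 0 - ε := div_mul_cancel₀ _ hden.ne'
        nlinarith
      · push_neg at h; linarith
    nlinarith
  refine ⟨⟨hθ0, hθ1⟩, key q hmq, key r hmr, ?_⟩
  funext i
  have := congrFun hquad i
  simp only [Pi.add_apply, Pi.smul_apply, Pi.sub_apply, smul_eq_mul] at this ⊢
  nlinarith [this]
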